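/- arXiv:2112.01107 — 4 statements merged into one kernel-verified Lean document; each statement's English description precedes it below -/
import Mathlib

section
/- Let M be a real symmetric positive definite m×m matrix and let A be a real n×m matrix such that AᵀA is positive definite. Let y : ℝ → ℝᵐ be differentiable with y'(t) = -M⁻¹ AᵀA y(t) for all t ≥ 0. Then there exists λ > 0 such that for all t ≥ 0, y(t)ᵀ M y(t) ≤ exp(-λ t) · y(0)ᵀ M y(0); in particular y(t) → 0 exponentially fast as t → ∞. -/
open Matrix

private lemma quad_cont {m : ℕ} (C : Matrix (Fin m) (Fin m) ℝ) :
    Continuous (fun x : Fin m → ℝ => x ⬝ᵥ (C *ᵥ x)) := by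
  simp only [dotProduct, mulVec]
  exact continuous_finset_sum _ fun i _ => (continuous_apply i).mul
    (continuous_finset_sum _ fun j _ => continuous_const.mul (continuous_apply j))

private lemma quad_smul {m : ℕ} (C : Matrix (Fin m) (Fin m) ℝ) (s : ℝ) (x : Fin m → ℝ) :
    (s • x) ⬝ᵥ (C *ᵥ (s • x)) = s ^ 2 * (x ⬝ᵥ (C *ᵥ x)) := by
  rw [Matrix.mulVec_smul, smul_dotProduct, dotProduct_smul, smul_eq_mul, smul_eq_mul]
  ring

private lemma quad_bound {m : ℕ} (M B : Matrix (Fin m) (Fin m) ℝ)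
    (hM : M.PosDef) (hB : B.PosDef) :
    ∃ c : ℝ, 0 < c ∧ ∀ x : Fin m → ℝ, c * (x ⬝ᵥ (M *ᵥ x)) ≤ x ⬝ᵥ (B *ᵥ x) := by
  rcases Nat.eq_zero_or_pos m with hm | hm
  · subst hm
    exact ⟨1, one_pos, fun x => by simp [dotProduct]⟩
  haveI : Nonempty (Fin m) := ⟨⟨0, hm⟩⟩
  set S := Metric.sphere (0 : Fin m → ℝ) 1 with hSdef
  have hS : IsCompact S := isCompact_sphere _ _
  have hne : S.Nonempty := NormedSpace.sphere_nonempty.2 zero_le_one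
  obtain ⟨xb, hxbS, hxb⟩ := hS.exists_isMinOn hne (quad_cont B).continuousOn
  obtain ⟨xm, hxmS, hxm⟩ := hS.exists_isMaxOn hne (quad_cont M).continuousOn
  have hxb0 : xb ≠ 0 := by
    intro h
    have := mem_sphere_zero_iff_norm.1 hxbS
    rw [h] at this; simp at this
  have hxm0 : xm ≠ 0 := by
    intro h
    have := mem_sphere_zero_iff_norm.1 hxmS
    rw [h] at this; simp at this
  set b := xb ⬝ᵥ (B *ᵥ xb) with hbdef
  set a := xm ⬝ᵥ (M *ᵥ xm) with hadef
  have hb : 0 < b := hB.dotProduct_mulVec_pos hxb0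
  have ha : 0 < a := hM.dotProduct_mulVec_pos hxm0
  refine ⟨b / a, div_pos hb ha, fun x => ?_⟩
  rcases eq_or_ne x 0 with rfl | hx0
  · simp
  have hnx : (0 : ℝ) < ‖x‖ := norm_pos_iff.2 hx0
  set u := ‖x‖⁻¹ • x with hudef
  have huS : u ∈ S := by
    rw [hSdef, mem_sphere_zero_iff_norm, hudef, norm_smul, norm_inv, norm_norm,
      inv_mul_cancel₀ hnx.ne']
  have hMu : u ⬝ᵥ (M *ᵥ u) ≤ a := hxm huS
  have hBu : b ≤ u ⬝ᵥ (B *ᵥ u) := hxb huS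
  have key : b / a * (u ⬝ᵥ (M *ᵥ u)) ≤ u ⬝ᵥ (B *ᵥ u) := by
    calc b / a * (u ⬝ᵥ (M *ᵥ u)) ≤ b / a * a :=
          mul_le_mul_of_nonneg_left hMu (div_pos hb ha).le
      _ = b := by field_simp
      _ ≤ u ⬝ᵥ (B *ᵥ u) := hBu
  have hq : ∀ C : Matrix (Fin m) (Fin m) ℝ, x ⬝ᵥ (C *ᵥ x) = ‖x‖ ^ 2 * (u ⬝ᵥ (C *ᵥ u)) := by
    intro C
    rw [hudef, quad_smul]
    field_simp
  calc b / a * (x ⬝ᵥ (M *ᵥ x)) = ‖x‖ ^ 2 * (b / a * (u ⬝ᵥ (M *ᵥ u))) := by rw [hq M]; ring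
    _ ≤ ‖x‖ ^ 2 * (u ⬝ᵥ (B *ᵥ u)) := mul_le_mul_of_nonneg_left key (sq_nonneg _)
    _ = x ⬝ᵥ (B *ᵥ x) := (hq B).symm

/-- Exponential stability of the boundary-layer system `ẏ = -M⁻¹AᵀA y`:
if `M` is real symmetric positive definite and `AᵀA` is positive definite, then along any
solution the Lyapunov function `yᵀMy` decays exponentially, i.e. there exists `λ > 0`
such that `y(t)ᵀ M y(t) ≤ exp(-λ t) y(0)ᵀ M y(0)` for all `t ≥ 0`. -/
theorem stmt_5 (n m : ℕ) (M : Matrix (Fin m) (Fin m) ℝ) (A : Matrix (Fin n) (Fin m) ℝ)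
    (hM : M.PosDef) (hA : (Aᵀ * A).PosDef)
    (y : ℝ → Fin m → ℝ)
    (hy : ∀ t : ℝ, 0 ≤ t → HasDerivAt y (-(M⁻¹ * (Aᵀ * A)) *ᵥ y t) t) :
    ∃ lam : ℝ, 0 < lam ∧ ∀ t : ℝ, 0 ≤ t →
      y t ⬝ᵥ (M *ᵥ y t) ≤ Real.exp (-lam * t) * (y 0 ⬝ᵥ (M *ᵥ y 0)) := by
  obtain ⟨c, hc, hcb⟩ := quad_bound M (Aᵀ * A) hM hA
  set B := Aᵀ * A with hBdef
  have hdet : IsUnit M.det := isUnit_iff_ne_zero.2 hM.det_pos.ne'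
  have hMsym : Mᵀ = M := hM.1
  set V : ℝ → ℝ := fun t => y t ⬝ᵥ (M *ᵥ y t) with hVdef
  set g : ℝ → Fin m → ℝ := fun t => -(M⁻¹ * B) *ᵥ y t with hgdef
  have hMg : ∀ t, M *ᵥ g t = -(B *ᵥ y t) := by
    intro t
    rw [hgdef]
    simp only [Matrix.neg_mulVec, Matrix.mulVec_neg, Matrix.mulVec_mulVec,
      Matrix.mul_nonsing_inv_cancel_left M B hdet]
  have hVd : ∀ t, 0 ≤ t → HasDerivAt V (-2 * (y t ⬝ᵥ (B *ᵥ y t))) t := by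
    intro t ht
    have hyi : ∀ i, HasDerivAt (fun s => y s i) (g t i) t := fun i =>
      hasDerivAt_pi.mp (hy t ht) i
    have h1 : HasDerivAt (fun s => ∑ i, ∑ j, y s i * (M i j * y s j))
        (∑ i, ∑ j, (g t i * (M i j * y t j) + y t i * (M i j * g t j))) t :=
      HasDerivAt.fun_sum fun i _ => HasDerivAt.fun_sum fun j _ =>
        (hyi i).mul ((hyi j).const_mul (M i j))
    have e1 : V = fun s => ∑ i, ∑ j, y s i * (M i j * y s j) := by
      funext s; simp [hVdef, dotProduct, mulVec, Finset.mul_sum]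
    have e2 : ∑ i, ∑ j, (g t i * (M i j * y t j) + y t i * (M i j * g t j))
        = g t ⬝ᵥ (M *ᵥ y t) + y t ⬝ᵥ (M *ᵥ g t) := by
      simp [dotProduct, mulVec, Finset.mul_sum, Finset.sum_add_distrib]
    have h2 : HasDerivAt V (g t ⬝ᵥ (M *ᵥ y t) + y t ⬝ᵥ (M *ᵥ g t)) t := by
      rw [e1, ← e2]; exact h1
    have hgM : g t ⬝ᵥ (M *ᵥ y t) = y t ⬝ᵥ (M *ᵥ g t) := by
      rw [Matrix.dotProduct_mulVec, ← Matrix.mulVec_transpose, hMsym, dotProduct_comm]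
    have h3 : y t ⬝ᵥ (M *ᵥ g t) = -(y t ⬝ᵥ (B *ᵥ y t)) := by
      rw [hMg t, dotProduct_neg]
    rw [hgM, h3] at h2
    convert h2 using 1; ring
  refine ⟨c, hc, fun t ht => ?_⟩
  set F : ℝ → ℝ := fun s => Real.exp (c * s) * V s with hFdef
  have hFd : ∀ s, 0 ≤ s → HasDerivAt F
      (c * Real.exp (c * s) * V s + Real.exp (c * s) * (-2 * (y s ⬝ᵥ (B *ᵥ y s)))) s := by
    intro s hs
    have he : HasDerivAt (fun r => Real.exp (c * r)) (c * Real.exp (c * s)) s := by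
      simpa [mul_comm] using ((hasDerivAt_id s).const_mul c).exp
    exact he.mul (hVd s hs)
  have hanti : AntitoneOn F (Set.Ici 0) := by
    apply antitoneOn_of_deriv_nonpos (convex_Ici 0)
    · exact fun s hs => ((hFd s hs).continuousAt).continuousWithinAt
    · intro s hs
      rw [interior_Ici] at hs
      exact (hFd s hs.le).differentiableAt.differentiableWithinAt
    · intro s hs
      rw [interior_Ici] at hs
      rw [(hFd s hs.le).deriv]
      have hq := hcb (y s)
      have hqnn : (0 : ℝ) ≤ y s ⬝ᵥ (B *ᵥ y s) := by
        rcases eq_or_ne (y s) 0 with h0 | h0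
        · simp [h0]
        · exact (hA.dotProduct_mulVec_pos h0).le
      have hE := Real.exp_pos (c * s)
      nlinarith [mul_le_mul_of_nonneg_left hq hE.le, mul_nonneg hE.le hqnn]
  have h0 : F t ≤ F 0 := hanti Set.self_mem_Ici ht ht
  have hFt : Real.exp (c * t) * V t ≤ V 0 := by
    simpa [hFdef] using h0
  have hEt : Real.exp (-c * t) * (Real.exp (c * t) * V t) = V t := by
    rw [← mul_assoc, ← Real.exp_add]
    ring_nf
    simp
  calc V t = Real.exp (-c * t) * (Real.exp (c * t) * V t) := hEt.symm
    _ ≤ Real.exp (-c * t) * V 0 :=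
        mul_le_mul_of_nonneg_left hFt (Real.exp_pos _).le
end

section
/- Let D and K̄ be m×m diagonal matrices, D with positive diagonal entries and K̄ with diagonal entries k̄₁,…,k̄ₘ > 0. Let f : ℝᵐ → ℝᵐ be continuously differentiable, let e ∈ ℝᵐ with e ≠ 0 and f(e) = -K̄ e, let τ* > 0, and let y : [0, τ*] → ℝᵐ satisfy y(0) = e and y'(s) = f(y(s)) for all s ∈ [0, τ*]. Suppose there are constants a, b > 0 such that ‖f(y(s))‖_{D,2} ≤ a ‖e‖_{D,2} and the operator norm of f'(y(s)) with respect to the norm ‖·‖_{D,2} is at most b ‖e‖_{D,2}, for all s ∈ [0, τ*]. Then for every τ ∈ [0, τ*], ‖y(τ)‖_{D,2} ≤ ( maxᵢ |1 - τ k̄ᵢ| + (1/2) a b ‖e‖_{D,2} τ² ) · ‖e‖_{D,2}. -/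
/-- Inequality (16) of the paper: for the auxiliary system `ė' = f(e')` with
`f(e) = -K̄ e`, if along the trajectory `‖f(y(s))‖_{D,2} ≤ a ‖e‖_{D,2}` and the
`‖·‖_{D,2}`-operator norm of `f'(y(s))` is at most `b ‖e‖_{D,2}`, then
`‖y(τ)‖_{D,2} ≤ (maxᵢ |1 - τ k̄ᵢ| + (1/2) a b ‖e‖_{D,2} τ²) ‖e‖_{D,2}` on `[0, τ*]`.
Here `D`, `K̄` are diagonal with positive entries and `‖x‖_{D,2} = √(∑ i, (dᵢ xᵢ)²)`. -/
theorem stmt_8 (m : ℕ) [NeZero m] (d k : Fin m → ℝ)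
    (hd : ∀ i, 0 < d i) (hk : ∀ i, 0 < k i)
    (f : (Fin m → ℝ) → (Fin m → ℝ)) (hf : ContDiff ℝ 1 f)
    (e : Fin m → ℝ) (he : e ≠ 0) (hfe : f e = fun i => -(k i * e i))
    (τstar : ℝ) (hτstar : 0 < τstar)
    (y : ℝ → Fin m → ℝ) (hy0 : y 0 = e)
    (hy : ∀ s ∈ Set.Icc (0 : ℝ) τstar, HasDerivAt y (f (y s)) s)
    (a b : ℝ) (ha : 0 < a) (hb : 0 < b)
    (hfb : ∀ s ∈ Set.Icc (0 : ℝ) τstar,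
      Real.sqrt (∑ i, (d i * f (y s) i) ^ 2) ≤ a * Real.sqrt (∑ i, (d i * e i) ^ 2))
    (hdb : ∀ s ∈ Set.Icc (0 : ℝ) τstar, ∀ v : Fin m → ℝ,
      Real.sqrt (∑ i, (d i * fderiv ℝ f (y s) v i) ^ 2) ≤
        b * Real.sqrt (∑ i, (d i * e i) ^ 2) * Real.sqrt (∑ i, (d i * v i) ^ 2)) :
    ∀ τ ∈ Set.Icc (0 : ℝ) τstar,
      Real.sqrt (∑ i, (d i * y τ i) ^ 2) ≤
        (Finset.univ.sup' Finset.univ_nonempty (fun i => |1 - τ * k i|) +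
            (1 / 2) * a * b * Real.sqrt (∑ i, (d i * e i) ^ 2) * τ ^ 2) *
          Real.sqrt (∑ i, (d i * e i) ^ 2) := by
  -- the weighting map into Euclidean space
  set L : (Fin m → ℝ) →L[ℝ] EuclideanSpace ℝ (Fin m) :=
    LinearMap.toContinuousLinearMap
      ((WithLp.linearEquiv 2 ℝ (Fin m → ℝ)).symm.toLinearMap ∘ₗ (LinearMap.pi (fun i => d i • LinearMap.proj i) :
        (Fin m → ℝ) →ₗ[ℝ] (Fin m → ℝ))) with hL
  have hLapp : ∀ x : Fin m → ℝ, ∀ i, L x i = d i * x i := by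
    intro x i
    rfl
  have hLnorm : ∀ x : Fin m → ℝ, ‖L x‖ = Real.sqrt (∑ i, (d i * x i) ^ 2) := by
    intro x
    rw [EuclideanSpace.norm_eq]
    congr 1
    refine Finset.sum_congr rfl fun i _ => ?_
    rw [hLapp, Real.norm_eq_abs, sq_abs]
  set n := Real.sqrt (∑ i, (d i * e i) ^ 2) with hn
  have hn0 : 0 ≤ n := Real.sqrt_nonneg _
  intro τ hτ
  have hτ0 : 0 ≤ τ := hτ.1
  have hτs : τ ≤ τstar := hτ.2
  -- w s = L (f (y s))
  set w : ℝ → EuclideanSpace ℝ (Fin m) := fun s => L (f (y s)) with hw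
  have hyc : ∀ s ∈ Set.Icc (0:ℝ) τstar, ContinuousWithinAt y (Set.Icc (0:ℝ) τstar) s :=
    fun s hs => ((hy s hs).continuousAt).continuousWithinAt
  -- derivative of w
  have hwderiv : ∀ s ∈ Set.Icc (0:ℝ) τstar,
      HasDerivAt w (L (fderiv ℝ f (y s) (f (y s)))) s := by
    intro s hs
    have h1 : HasFDerivAt f (fderiv ℝ f (y s)) (y s) :=
      (hf.differentiable one_ne_zero (y s)).hasFDerivAt
    have h2 : HasDerivAt (fun t => f (y t)) (fderiv ℝ f (y s) (f (y s))) s :=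
      h1.comp_hasDerivAt s (hy s hs)
    exact (L.hasFDerivAt.comp_hasDerivAt s h2)
  -- bound on ‖w' s‖
  have hwderiv_bound : ∀ s ∈ Set.Icc (0:ℝ) τstar,
      ‖L (fderiv ℝ f (y s) (f (y s)))‖ ≤ a * b * n ^ 2 := by
    intro s hs
    rw [hLnorm]
    calc Real.sqrt (∑ i, (d i * fderiv ℝ f (y s) (f (y s)) i) ^ 2)
        ≤ b * n * Real.sqrt (∑ i, (d i * f (y s) i) ^ 2) := hdb s hs _
      _ ≤ b * n * (a * n) := by
          apply mul_le_mul_of_nonneg_left (hfb s hs)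
          positivity
      _ = a * b * n ^ 2 := by ring
  -- mean value bound: ‖w s - w 0‖ ≤ a b n² s on [0,τ*]
  have hwmv : ∀ s ∈ Set.Icc (0:ℝ) τstar, ‖w s - w 0‖ ≤ a * b * n ^ 2 * s := by
    intro s hs
    have := Convex.norm_image_sub_le_of_norm_hasDerivWithin_le
      (f := w) (f' := fun s => L (fderiv ℝ f (y s) (f (y s))))
      (s := Set.Icc (0:ℝ) τstar) (C := a * b * n ^ 2)
      (fun t ht => (hwderiv t ht).hasDerivWithinAt)
      hwderiv_bound (convex_Icc _ _)
      (Set.left_mem_Icc.2 hτstar.le) hs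
    simpa [Real.norm_eq_abs, abs_of_nonneg hs.1] using this
  -- continuity of w on Icc
  have hwc : ContinuousOn w (Set.Icc (0:ℝ) τstar) :=
    fun s hs => ((hwderiv s hs).continuousAt).continuousWithinAt
  have hsub : Set.uIcc (0:ℝ) τ ⊆ Set.Icc (0:ℝ) τstar := by
    rw [Set.uIcc_of_le hτ0]
    exact Set.Icc_subset_Icc le_rfl hτs
  have hwint : IntervalIntegrable w MeasureTheory.volume 0 τ :=
    (hwc.mono hsub).intervalIntegrable
  -- FTC: L (y τ) - L e = ∫ w
  have hz : ∀ s ∈ Set.Icc (0:ℝ) τstar, HasDerivAt (fun t => L (y t)) (w s) s :=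
    fun s hs => L.hasFDerivAt.comp_hasDerivAt s (hy s hs)
  have hftc : L (y τ) - L (y 0) = ∫ s in (0:ℝ)..τ, w s := by
    rw [intervalIntegral.integral_eq_sub_of_hasDerivAt
      (fun s hs => hz s (hsub hs)) hwint]
  -- split the integral
  have hsplit : (∫ s in (0:ℝ)..τ, w s) = (∫ s in (0:ℝ)..τ, (w s - w 0)) + τ • w 0 := by
    rw [intervalIntegral.integral_sub hwint intervalIntegrable_const,
      intervalIntegral.integral_const]
    simp
  have hw0 : w 0 = L (f e) := by show L (f (y 0)) = L (f e); rw [hy0]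
  -- bound the remainder integral
  have hrem : ‖∫ s in (0:ℝ)..τ, (w s - w 0)‖ ≤ (1/2) * a * b * n ^ 2 * τ ^ 2 := by
    have hb1 : IntervalIntegrable (fun s => a * b * n ^ 2 * s) MeasureTheory.volume 0 τ :=
      (continuous_const.mul continuous_id).intervalIntegrable _ _
    have := intervalIntegral.norm_integral_le_abs_of_norm_le
      (f := fun s => w s - w 0) (g := fun s => a * b * n ^ 2 * s)
      (μ := MeasureTheory.volume) (a := 0) (b := τ) ?_ hb1
    · refine this.trans ?_
      rw [intervalIntegral.integral_const_mul, integral_id]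
      have h2 : a * b * n ^ 2 * ((τ ^ 2 - 0 ^ 2) / 2) = (1/2) * a * b * n ^ 2 * τ ^ 2 := by ring
      rw [h2, abs_of_nonneg (by positivity)]
    · filter_upwards [MeasureTheory.ae_restrict_mem measurableSet_uIoc] with t ht
      have ht' : t ∈ Set.Icc (0:ℝ) τstar := hsub (Set.uIoc_subset_uIcc ht)
      exact hwmv t ht'
  -- bound the linear term
  set M := Finset.univ.sup' Finset.univ_nonempty (fun i => |1 - τ * k i|) with hM
  have hM0 : 0 ≤ M := le_trans (abs_nonneg (1 - τ * k 0))
    (Finset.le_sup' (fun i => |1 - τ * k i|) (Finset.mem_univ (0 : Fin m)))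
  have hlin : ‖L e + τ • w 0‖ ≤ M * n := by
    rw [hw0]
    have heq : ∀ i : Fin m, (L e + τ • L (f e)) i = (1 - τ * k i) * (d i * e i) := by
      intro i
      have : (L e + τ • L (f e)) i = L e i + τ * L (f e) i := rfl
      rw [this, hLapp, hLapp, hfe]
      ring
    rw [EuclideanSpace.norm_eq]
    have hMn : M * n = Real.sqrt (M ^ 2 * ∑ i, (d i * e i) ^ 2) := by
      rw [Real.sqrt_mul (by positivity), Real.sqrt_sq hM0, hn]
    rw [hMn, Finset.mul_sum]
    apply Real.sqrt_le_sqrt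
    apply Finset.sum_le_sum
    intro i _
    rw [heq i, Real.norm_eq_abs, sq_abs, mul_pow]
    apply mul_le_mul_of_nonneg_right _ (by positivity)
    rw [← sq_abs]
    apply pow_le_pow_left₀ (abs_nonneg _) _ 2
    exact Finset.le_sup' (fun i => |1 - τ * k i|) (Finset.mem_univ i)
  -- assemble
  have key : L (y τ) = (L e + τ • w 0) + ∫ s in (0:ℝ)..τ, (w s - w 0) := by
    have h := hftc
    rw [hsplit, hy0] at h
    have h2 := eq_add_of_sub_eq h
    rw [h2]; abel
  calc Real.sqrt (∑ i, (d i * y τ i) ^ 2) = ‖L (y τ)‖ := (hLnorm _).symm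
    _ ≤ ‖L e + τ • w 0‖ + ‖∫ s in (0:ℝ)..τ, (w s - w 0)‖ := by
        rw [key]; exact norm_add_le _ _
    _ ≤ M * n + (1/2) * a * b * n ^ 2 * τ ^ 2 := add_le_add hlin hrem
    _ = (M + (1/2) * a * b * n * τ ^ 2) * n := by ring
end

section
/- Let D and K̄ be m×m diagonal matrices, D with positive diagonal entries and K̄ with diagonal entries k̄₁,…,k̄ₘ > 0, and let μ > 0. Define ĝ(τ) := maxᵢ |1 - τ k̄ᵢ| + μ τ², let τ̄_s > 0 be the unique positive solution of ĝ(τ̄_s) = 1, let τ̄_o ∈ [0, τ̄_s] be a minimizer of ĝ over [0, τ̄_s], and set ρ := ĝ(τ̄_o). Then: (i) 0 < τ̄_o and 0 ≤ ρ < 1; and (ii) for every e ∈ ℝᵐ and every function y : [0, τ̄_o] → ℝᵐ with y(0) = e satisfying ‖y(τ) - (I - τ K̄) e‖_{D,2} ≤ μ τ² ‖e‖_{D,2} for all τ ∈ [0, τ̄_o], one has ‖y(τ)‖_{D,2} ≤ ‖e‖_{D,2} for all τ ∈ [0, τ̄_o], and ‖y(τ̄_o)‖_{D,2} ≤ ρ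 ‖e‖_{D,2}. -/
lemma aux_tri {m : ℕ} (a b : Fin m → ℝ) :
    Real.sqrt (∑ i, (a i + b i) ^ 2) ≤
      Real.sqrt (∑ i, (a i) ^ 2) + Real.sqrt (∑ i, (b i) ^ 2) := by
  have h := norm_add_le (E := EuclideanSpace ℝ (Fin m)) (WithLp.toLp 2 a) (WithLp.toLp 2 b)
  simpa [EuclideanSpace.norm_eq, Real.norm_eq_abs, sq_abs] using h

lemma aux_mono {m : ℕ} (a b : Fin m → ℝ) (h : ∀ i, (a i) ^ 2 ≤ (b i) ^ 2) :
    Real.sqrt (∑ i, (a i) ^ 2) ≤ Real.sqrt (∑ i, (b i) ^ 2) :=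
  Real.sqrt_le_sqrt (Finset.sum_le_sum fun i _ => h i)

/-- Proposition 2 of the paper (offline pair `(τ̄_o, ρ)`): with `ĝ(τ) = maxᵢ |1 - τ k̄ᵢ| + μτ²`,
`τ̄_s > 0` the unique positive solution of `ĝ(τ̄_s) = 1`, `τ̄_o` a minimizer of `ĝ` over
`[0, τ̄_s]` and `ρ = ĝ(τ̄_o)`, one has `0 < τ̄_o`, `0 ≤ ρ < 1`, and every trajectory
satisfying the Taylor-remainder bound `‖y(τ) - (I - τK̄)e‖_{D,2} ≤ μ τ² ‖e‖_{D,2}` on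
`[0, τ̄_o]` with `y(0) = e` satisfies `‖y(τ)‖_{D,2} ≤ ‖e‖_{D,2}` on `[0, τ̄_o]` and
`‖y(τ̄_o)‖_{D,2} ≤ ρ ‖e‖_{D,2}`. Here `‖x‖_{D,2} = √(∑ i, (dᵢ xᵢ)²)`. -/
theorem stmt_12 (m : ℕ) [NeZero m] (d k : Fin m → ℝ)
    (hd : ∀ i, 0 < d i) (hk : ∀ i, 0 < k i) (μ : ℝ) (hμ : 0 < μ)
    (τs τo ρ : ℝ) (hτs : 0 < τs)
    (hgs : Finset.univ.sup' Finset.univ_nonempty (fun i => |1 - τs * k i|) + μ * τs ^ 2 = 1)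
    (hus : ∀ τ : ℝ, 0 < τ →
      Finset.univ.sup' Finset.univ_nonempty (fun i => |1 - τ * k i|) + μ * τ ^ 2 = 1 → τ = τs)
    (hτo : τo ∈ Set.Icc 0 τs)
    (hmin : ∀ τ ∈ Set.Icc (0 : ℝ) τs,
      Finset.univ.sup' Finset.univ_nonempty (fun i => |1 - τo * k i|) + μ * τo ^ 2 ≤
        Finset.univ.sup' Finset.univ_nonempty (fun i => |1 - τ * k i|) + μ * τ ^ 2)
    (hρ : ρ = Finset.univ.sup' Finset.univ_nonempty (fun i => |1 - τo * k i|) + μ * τo ^ 2) :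
    (0 < τo ∧ 0 ≤ ρ ∧ ρ < 1) ∧
    ∀ (e : Fin m → ℝ) (y : ℝ → Fin m → ℝ), y 0 = e →
      (∀ τ ∈ Set.Icc (0 : ℝ) τo,
        Real.sqrt (∑ i, (d i * (y τ i - (1 - τ * k i) * e i)) ^ 2) ≤
          μ * τ ^ 2 * Real.sqrt (∑ i, (d i * e i) ^ 2)) →
      (∀ τ ∈ Set.Icc (0 : ℝ) τo,
        Real.sqrt (∑ i, (d i * y τ i) ^ 2) ≤ Real.sqrt (∑ i, (d i * e i) ^ 2)) ∧
      Real.sqrt (∑ i, (d i * y τo i) ^ 2) ≤ ρ * Real.sqrt (∑ i, (d i * e i) ^ 2) := by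
  set S : ℝ → ℝ := fun τ => Finset.univ.sup' Finset.univ_nonempty (fun i => |1 - τ * k i|)
    with hS
  set g : ℝ → ℝ := fun τ => S τ + μ * τ ^ 2 with hgdef
  -- sup nonneg
  have i0 : Fin m := ⟨0, Nat.pos_of_ne_zero (NeZero.ne m)⟩
  have hSnn : ∀ τ, 0 ≤ S τ := fun τ =>
    le_trans (abs_nonneg _) (Finset.le_sup' (fun i => |1 - τ * k i|) (Finset.mem_univ i0))
  -- g 0 = 1
  have hg0 : g 0 = 1 := by
    simp [hgdef, hS]
  -- g ≤ 1 on [0, τs] by convexity (direct computation)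
  have hgle : ∀ τ ∈ Set.Icc (0 : ℝ) τs, g τ ≤ 1 := by
    rintro τ ⟨h0, h1⟩
    set t : ℝ := τ / τs with ht
    have ht0 : 0 ≤ t := div_nonneg h0 hτs.le
    have ht1 : t ≤ 1 := div_le_one_of_le₀ h1 hτs.le
    have hττ : τ = t * τs := by rw [ht, div_mul_cancel₀ τ hτs.ne']
    have hSb : S τ ≤ (1 - t) + t * S τs := by
      apply Finset.sup'_le
      intro i _
      have h1i : |1 - τ * k i| ≤ (1 - t) + t * |1 - τs * k i| := by
        have : 1 - τ * k i = (1 - t) + t * (1 - τs * k i) := by rw [hττ]; ring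
        rw [this]
        calc |(1 - t) + t * (1 - τs * k i)| ≤ |1 - t| + |t * (1 - τs * k i)| := abs_add_le _ _
          _ = (1 - t) + t * |1 - τs * k i| := by
              rw [abs_of_nonneg (by linarith), abs_mul, abs_of_nonneg ht0]
      exact h1i.trans (by
        have := Finset.le_sup' (fun i => |1 - τs * k i|) (Finset.mem_univ i)
        nlinarith [this])
    have hSs : S τs + μ * τs ^ 2 = 1 := hgs
    have hμt : μ * τ ^ 2 ≤ t * (μ * τs ^ 2) := by
      rw [hττ]
      nlinarith [mul_nonneg (mul_nonneg hμ.le (sq_nonneg τs)) (mul_nonneg ht0 (sub_nonneg.2 ht1))]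
    show S τ + μ * τ ^ 2 ≤ 1
    nlinarith [hSb, hSs, hμt, ht0, ht1]
  -- a point where g < 1
  have hkmin : ∃ km, 0 < km ∧ ∀ i, km ≤ k i := by
    obtain ⟨i0, _, hi0⟩ := Finset.exists_min_image Finset.univ k ⟨_, Finset.mem_univ
      (⟨0, Nat.pos_of_ne_zero (NeZero.ne m)⟩ : Fin m)⟩
    exact ⟨k i0, hk i0, fun i => hi0 i (Finset.mem_univ i)⟩
  obtain ⟨km, hkm0, hkm⟩ := hkmin
  have hkmax : ∃ kM, 0 < kM ∧ ∀ i, k i ≤ kM := by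
    obtain ⟨i0, _, hi0⟩ := Finset.exists_max_image Finset.univ k ⟨_, Finset.mem_univ
      (⟨0, Nat.pos_of_ne_zero (NeZero.ne m)⟩ : Fin m)⟩
    exact ⟨k i0, hk i0, fun i => hi0 i (Finset.mem_univ i)⟩
  obtain ⟨kM, hkM0, hkM⟩ := hkmax
  set τ₀ : ℝ := min τs (min (km / (2 * μ)) (1 / kM)) with hτ₀
  have hτ₀pos : 0 < τ₀ := by
    apply lt_min hτs
    apply lt_min <;> positivity
  have hτ₀s : τ₀ ≤ τs := min_le_left _ _
  have hgτ₀ : g τ₀ < 1 := by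
    have hSb : S τ₀ ≤ 1 - τ₀ * km := by
      apply Finset.sup'_le
      intro i _
      have h1 : τ₀ * k i ≤ 1 := by
        have : τ₀ ≤ 1 / kM := le_trans (min_le_right _ _) (min_le_right _ _)
        calc τ₀ * k i ≤ (1 / kM) * kM := by
              apply mul_le_mul this (hkM i) (hk i).le (by positivity)
          _ = 1 := by field_simp
      rw [abs_of_nonneg (by linarith)]
      have := hkm i
      nlinarith
    have hμb : μ * τ₀ ^ 2 ≤ τ₀ * km / 2 := by
      have h2 : τ₀ ≤ km / (2 * μ) := le_trans (min_le_right _ _) (min_le_left _ _)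
      have h3 : τ₀ * (2 * μ) ≤ km := (le_div_iff₀ (by positivity)).mp h2
      nlinarith [hτ₀pos, h3]
    have : g τ₀ = S τ₀ + μ * τ₀ ^ 2 := rfl
    nlinarith
  -- ρ < 1
  have hρeq : ρ = g τo := hρ
  have hρlt : ρ < 1 := by
    have := hmin τ₀ ⟨hτ₀pos.le, hτ₀s⟩
    calc ρ = g τo := hρeq
      _ ≤ g τ₀ := this
      _ < 1 := hgτ₀
  have hρnn : 0 ≤ ρ := by
    rw [hρeq]
    have := hSnn τo
    have : 0 ≤ μ * τo ^ 2 := by positivity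
    simp only [hgdef]
    nlinarith [hSnn τo]
  have hτopos : 0 < τo := by
    rcases lt_or_eq_of_le hτo.1 with h | h
    · exact h
    · exfalso
      rw [hρeq, ← h, hg0] at hρlt
      exact lt_irrefl 1 hρlt
  refine ⟨⟨hτopos, hρnn, hρlt⟩, ?_⟩
  intro e y hy0 hbd
  set Ne : ℝ := Real.sqrt (∑ i, (d i * e i) ^ 2) with hNe
  have hNenn : 0 ≤ Ne := Real.sqrt_nonneg _
  -- key bound
  have key : ∀ τ ∈ Set.Icc (0 : ℝ) τo,
      Real.sqrt (∑ i, (d i * y τ i) ^ 2) ≤ g τ * Ne := by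
    rintro τ hτ
    have htri := aux_tri (fun i => d i * (y τ i - (1 - τ * k i) * e i))
      (fun i => d i * ((1 - τ * k i) * e i))
    have heq : ∀ i, d i * (y τ i - (1 - τ * k i) * e i) + d i * ((1 - τ * k i) * e i)
        = d i * y τ i := fun i => by ring
    simp only [heq] at htri
    have hb2 : Real.sqrt (∑ i, (d i * ((1 - τ * k i) * e i)) ^ 2) ≤ S τ * Ne := by
      have hmono : Real.sqrt (∑ i, (d i * ((1 - τ * k i) * e i)) ^ 2)
          ≤ Real.sqrt (∑ i, (S τ * (d i * e i)) ^ 2) := by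
        apply aux_mono
        intro i
        have h1 : |1 - τ * k i| ≤ S τ :=
          Finset.le_sup' (fun i => |1 - τ * k i|) (Finset.mem_univ i)
        have h2 : (1 - τ * k i) ^ 2 ≤ (S τ) ^ 2 := by
          nlinarith [sq_abs (1 - τ * k i), abs_nonneg (1 - τ * k i)]
        nlinarith [mul_le_mul_of_nonneg_right h2 (sq_nonneg (d i * e i))]
      calc Real.sqrt (∑ i, (d i * ((1 - τ * k i) * e i)) ^ 2)
          ≤ Real.sqrt (∑ i, (S τ * (d i * e i)) ^ 2) := hmono
        _ = S τ * Ne := by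
            have hrw : (∑ i, (S τ * (d i * e i)) ^ 2)
                = (S τ) ^ 2 * ∑ i, (d i * e i) ^ 2 := by
              rw [Finset.mul_sum]
              exact Finset.sum_congr rfl fun i _ => by ring
            rw [hrw, Real.sqrt_mul (sq_nonneg _), Real.sqrt_sq (hSnn τ), hNe]
    calc Real.sqrt (∑ i, (d i * y τ i) ^ 2)
        ≤ Real.sqrt (∑ i, (d i * (y τ i - (1 - τ * k i) * e i)) ^ 2)
          + Real.sqrt (∑ i, (d i * ((1 - τ * k i) * e i)) ^ 2) := htri
      _ ≤ μ * τ ^ 2 * Ne + S τ * Ne := add_le_add (hbd τ hτ) hb2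
      _ = g τ * Ne := by simp only [hgdef]; ring
  constructor
  · intro τ hτ
    have h1 : g τ ≤ 1 := hgle τ ⟨hτ.1, hτ.2.trans hτo.2⟩
    calc Real.sqrt (∑ i, (d i * y τ i) ^ 2) ≤ g τ * Ne := key τ hτ
      _ ≤ 1 * Ne := mul_le_mul_of_nonneg_right h1 hNenn
      _ = Ne := one_mul _
  · calc Real.sqrt (∑ i, (d i * y τo i) ^ 2) ≤ g τo * Ne := key τo ⟨hτo.1, le_refl _⟩
      _ = ρ * Ne := by rw [hρeq]
end

section
/- Let D and K̄ be m×m diagonal matrices, D with positive diagonal entries and K̄ with diagonal entries k̄₁,…,k̄ₘ > 0, and let μ > 0. Define ĝ(τ) := maxᵢ |1 - τ k̄ᵢ| + μ τ², let τ̄_s > 0 be the unique positive solution of ĝ(τ̄_s) = 1, let τ̄_o ∈ [0, τ̄_s] be a minimizer of ĝ over [0, τ̄_s], and set ρ := ĝ(τ̄_o) < 1. Let e₀ ∈ ℝᵐ and suppose that for each h = 0, 1, 2, … there is a function y_h : [0, τ̄_o] → ℝᵐ with y_h(0) = e_h and ‖y_h(τ) - (I - τ K̄) e_h‖_{D,2}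 ≤ μ τ² ‖e_h‖_{D,2} for all τ ∈ [0, τ̄_o], where e_{h+1} := y_h(τ̄_o). Then for all h ≥ 0, ‖e_h‖_{D,2} ≤ ρʰ ‖e₀‖_{D,2}, and moreover ‖y_h(τ)‖_{D,2} ≤ ‖e_h‖_{D,2} for all τ ∈ [0, τ̄_o]. -/
/-- Proposition 3 of the paper (offline sampled-data strategy): with
`ĝ(τ) = maxᵢ |1 - τ k̄ᵢ| + μτ²`, `τ̄_s > 0` the unique positive solution of `ĝ(τ̄_s) = 1`,
`τ̄_o` a minimizer of `ĝ` over `[0, τ̄_s]` and `ρ = ĝ(τ̄_o) < 1`, if at each step `h` the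
intersample trajectory `y_h` starts at `e_h`, satisfies the remainder bound
`‖y_h(τ) - (I - τK̄)e_h‖_{D,2} ≤ μ τ² ‖e_h‖_{D,2}` on `[0, τ̄_o]`, and `e_{h+1} = y_h(τ̄_o)`,
then `‖e_h‖_{D,2} ≤ ρʰ ‖e_0‖_{D,2}` and `‖y_h(τ)‖_{D,2} ≤ ‖e_h‖_{D,2}` on `[0, τ̄_o]`.
Here `‖x‖_{D,2} = √(∑ i, (dᵢ xᵢ)²)`. -/
theorem stmt_13 (m : ℕ) [NeZero m] (d k : Fin m → ℝ)
    (hd : ∀ i, 0 < d i) (hk : ∀ i, 0 < k i) (μ : ℝ) (hμ : 0 < μ)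
    (τs τo ρ : ℝ) (hτs : 0 < τs)
    (hgs : Finset.univ.sup' Finset.univ_nonempty (fun i => |1 - τs * k i|) + μ * τs ^ 2 = 1)
    (hus : ∀ τ : ℝ, 0 < τ →
      Finset.univ.sup' Finset.univ_nonempty (fun i => |1 - τ * k i|) + μ * τ ^ 2 = 1 → τ = τs)
    (hτo : τo ∈ Set.Icc 0 τs)
    (hmin : ∀ τ ∈ Set.Icc (0 : ℝ) τs,
      Finset.univ.sup' Finset.univ_nonempty (fun i => |1 - τo * k i|) + μ * τo ^ 2 ≤
        Finset.univ.sup' Finset.univ_nonempty (fun i => |1 - τ * k i|) + μ * τ ^ 2)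
    (hρ : ρ = Finset.univ.sup' Finset.univ_nonempty (fun i => |1 - τo * k i|) + μ * τo ^ 2)
    (hρ1 : ρ < 1)
    (e : ℕ → Fin m → ℝ) (y : ℕ → ℝ → Fin m → ℝ)
    (hy0 : ∀ h : ℕ, y h 0 = e h)
    (hrem : ∀ h : ℕ, ∀ τ ∈ Set.Icc (0 : ℝ) τo,
      Real.sqrt (∑ i, (d i * (y h τ i - (1 - τ * k i) * e h i)) ^ 2) ≤
        μ * τ ^ 2 * Real.sqrt (∑ i, (d i * e h i) ^ 2))
    (hstep : ∀ h : ℕ, e (h + 1) = y h τo) :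
    ∀ h : ℕ,
      Real.sqrt (∑ i, (d i * e h i) ^ 2) ≤ ρ ^ h * Real.sqrt (∑ i, (d i * e 0 i) ^ 2) ∧
      ∀ τ ∈ Set.Icc (0 : ℝ) τo,
        Real.sqrt (∑ i, (d i * y h τ i) ^ 2) ≤ Real.sqrt (∑ i, (d i * e h i) ^ 2) := by

  classical
  have i0 : Fin m := ⟨0, Nat.pos_of_ne_zero (NeZero.ne m)⟩
  -- triangle inequality for weighted sqrt-of-sum-of-squares
  have hnorm : ∀ c : EuclideanSpace ℝ (Fin m), ‖c‖ = Real.sqrt (∑ i, (c i) ^ 2) := by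
    intro c
    rw [EuclideanSpace.norm_eq]
    congr 1
    exact Finset.sum_congr rfl fun i _ => by rw [Real.norm_eq_abs, sq_abs]
  have htri : ∀ a b : Fin m → ℝ,
      Real.sqrt (∑ i, (a i + b i) ^ 2) ≤
        Real.sqrt (∑ i, (a i) ^ 2) + Real.sqrt (∑ i, (b i) ^ 2) := by
    intro a b
    have h := norm_add_le ((WithLp.equiv 2 (Fin m → ℝ)).symm a)
      ((WithLp.equiv 2 (Fin m → ℝ)).symm b)
    rw [hnorm, hnorm, hnorm] at h
    simpa using h
  have hτo_pos : 0 < τo := by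
    rcases hτo.1.lt_or_eq with h | h
    · exact h
    · exfalso
      rw [hρ, ← h] at hρ1
      have hc : (fun i : Fin m => |1 - 0 * k i|) = fun _ => (1:ℝ) := by
        funext i; simp
      rw [hc, Finset.sup'_const] at hρ1
      norm_num at hρ1
  -- ĝ(τ) ≤ 1 on [0, τo] by convexity (direct computation)
  have hg_le : ∀ τ ∈ Set.Icc (0:ℝ) τo,
      Finset.univ.sup' Finset.univ_nonempty (fun i => |1 - τ * k i|) + μ * τ ^ 2 ≤ 1 := by
    rintro τ ⟨hτ0, hττo⟩
    set t := τ / τo with ht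
    have ht0 : 0 ≤ t := div_nonneg hτ0 hτo_pos.le
    have ht1 : t ≤ 1 := (div_le_one hτo_pos).mpr hττo
    have hττ : τ = t * τo := by rw [ht, div_mul_cancel₀ _ hτo_pos.ne']
    set M := Finset.univ.sup' Finset.univ_nonempty (fun i => |1 - τo * k i|) with hM
    have hsup : Finset.univ.sup' Finset.univ_nonempty (fun i => |1 - τ * k i|)
        ≤ (1 - t) + t * M := by
      apply Finset.sup'_le
      intro i _
      have heq : 1 - τ * k i = (1 - t) * 1 + t * (1 - τo * k i) := by rw [hττ]; ring
      have hMi : |1 - τo * k i| ≤ M :=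
        Finset.le_sup' (fun i => |1 - τo * k i|) (Finset.mem_univ i)
      calc |1 - τ * k i| = |(1 - t) * 1 + t * (1 - τo * k i)| := by rw [heq]
        _ ≤ |(1 - t) * 1| + |t * (1 - τo * k i)| := abs_add_le _ _
        _ = (1 - t) + t * |1 - τo * k i| := by
            rw [abs_mul, abs_mul, abs_one, abs_of_nonneg (by linarith : (0:ℝ) ≤ 1 - t),
              abs_of_nonneg ht0, mul_one]
        _ ≤ (1 - t) + t * M := by nlinarith
    have hq : μ * τ ^ 2 ≤ t * (μ * τo ^ 2) := by
      rw [hττ]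
      have h2 : t ^ 2 ≤ t := by nlinarith
      have h3 : μ * (t * τo) ^ 2 = t ^ 2 * (μ * τo ^ 2) := by ring
      rw [h3]
      exact mul_le_mul_of_nonneg_right h2 (by positivity)
    have hρ' : M + μ * τo ^ 2 = ρ := hρ.symm
    nlinarith
  -- key intersample bound
  have hkey : ∀ h : ℕ, ∀ τ ∈ Set.Icc (0:ℝ) τo,
      Real.sqrt (∑ i, (d i * y h τ i) ^ 2) ≤
        (Finset.univ.sup' Finset.univ_nonempty (fun i => |1 - τ * k i|) + μ * τ ^ 2) *
          Real.sqrt (∑ i, (d i * e h i) ^ 2) := by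
    intro h τ hτ
    set M := Finset.univ.sup' Finset.univ_nonempty (fun i => |1 - τ * k i|) with hM
    have hM0 : 0 ≤ M :=
      le_trans (abs_nonneg _) (Finset.le_sup' (fun i => |1 - τ * k i|) (Finset.mem_univ i0))
    have h1 : Real.sqrt (∑ i, (d i * y h τ i) ^ 2) ≤
        Real.sqrt (∑ i, (d i * ((1 - τ * k i) * e h i)) ^ 2)
        + Real.sqrt (∑ i, (d i * (y h τ i - (1 - τ * k i) * e h i)) ^ 2) := by
      have heq : ∀ i : Fin m, d i * y h τ i =
          d i * ((1 - τ * k i) * e h i) + d i * (y h τ i - (1 - τ * k i) * e h i) := by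
        intro i; ring
      calc Real.sqrt (∑ i, (d i * y h τ i) ^ 2)
          = Real.sqrt (∑ i, (d i * ((1 - τ * k i) * e h i)
              + d i * (y h τ i - (1 - τ * k i) * e h i)) ^ 2) := by
            congr 1
            exact Finset.sum_congr rfl fun i _ => by rw [← heq i]
        _ ≤ _ := htri _ _
    have h2 : Real.sqrt (∑ i, (d i * ((1 - τ * k i) * e h i)) ^ 2) ≤
        M * Real.sqrt (∑ i, (d i * e h i) ^ 2) := by
      have hterm : ∀ i : Fin m,
          (d i * ((1 - τ * k i) * e h i)) ^ 2 ≤ M ^ 2 * (d i * e h i) ^ 2 := by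
        intro i
        have hi : |1 - τ * k i| ≤ M :=
          Finset.le_sup' (fun i => |1 - τ * k i|) (Finset.mem_univ i)
        have hsq : (1 - τ * k i) ^ 2 ≤ M ^ 2 := by
          nlinarith [abs_nonneg (1 - τ * k i), sq_abs (1 - τ * k i)]
        nlinarith [sq_nonneg (d i * e h i)]
      calc Real.sqrt (∑ i, (d i * ((1 - τ * k i) * e h i)) ^ 2)
          ≤ Real.sqrt (∑ i, M ^ 2 * (d i * e h i) ^ 2) :=
            Real.sqrt_le_sqrt (Finset.sum_le_sum fun i _ => hterm i)
        _ = M * Real.sqrt (∑ i, (d i * e h i) ^ 2) := by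
            rw [← Finset.mul_sum, Real.sqrt_mul (sq_nonneg M), Real.sqrt_sq hM0]
    have h3 := hrem h τ hτ
    nlinarith [Real.sqrt_nonneg (∑ i, (d i * e h i) ^ 2)]
  have hρ0 : 0 ≤ ρ := by
    rw [hρ]
    have : (0:ℝ) ≤ Finset.univ.sup' Finset.univ_nonempty (fun i => |1 - τo * k i|) :=
      le_trans (abs_nonneg _) (Finset.le_sup' (fun i => |1 - τo * k i|) (Finset.mem_univ i0))
    nlinarith [sq_nonneg τo, hμ.le]
  have hstep' : ∀ h : ℕ, Real.sqrt (∑ i, (d i * e (h + 1) i) ^ 2) ≤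
      ρ * Real.sqrt (∑ i, (d i * e h i) ^ 2) := by
    intro h
    rw [hstep h, hρ]
    exact hkey h τo ⟨hτo_pos.le, le_refl τo⟩
  intro h
  constructor
  · induction h with
    | zero => simp
    | succ n ih =>
        calc Real.sqrt (∑ i, (d i * e (n + 1) i) ^ 2)
            ≤ ρ * Real.sqrt (∑ i, (d i * e n i) ^ 2) := hstep' n
          _ ≤ ρ * (ρ ^ n * Real.sqrt (∑ i, (d i * e 0 i) ^ 2)) :=
              mul_le_mul_of_nonneg_left ih hρ0
          _ = ρ ^ (n + 1) * Real.sqrt (∑ i, (d i * e 0 i) ^ 2) := by ring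
  · intro τ hτ
    calc Real.sqrt (∑ i, (d i * y h τ i) ^ 2)
        ≤ (Finset.univ.sup' Finset.univ_nonempty (fun i => |1 - τ * k i|) + μ * τ ^ 2) *
            Real.sqrt (∑ i, (d i * e h i) ^ 2) := hkey h τ hτ
      _ ≤ 1 * Real.sqrt (∑ i, (d i * e h i) ^ 2) :=
          mul_le_mul_of_nonneg_right (hg_le τ hτ) (Real.sqrt_nonneg _)
      _ = _ := one_mul _
end
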